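/- Let J ⊆ I ⊆ R be ideals of a commutative ring. Then J ∩ Iⁿ = J·Iⁿ⁻¹ for all n ≥ 1 if and only if Iⁿ⁺¹ ∩ J·Iⁿ⁻¹ = J·Iⁿ for all n ≥ 1. -/

import Mathlib

/-- Valabrega–Valla criterion: `J ∩ Iⁿ = J·Iⁿ⁻¹` for all `n ≥ 1` iff
`Iⁿ⁺¹ ∩ J·Iⁿ⁻¹ = J·Iⁿ` for all `n ≥ 1`. -/
theorem aluffi_torsion_free_iff_valabrega_valla {R : Type*} [CommRing R]
    (J I : Ideal R) (hJI : J ≤ I) :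
    (∀ n : ℕ, 1 ≤ n → J ⊓ I ^ n = J * I ^ (n - 1)) ↔
      (∀ n : ℕ, 1 ≤ n → I ^ (n + 1) ⊓ (J * I ^ (n - 1)) = J * I ^ n) := by
  constructor
  · intro h n hn
    apply le_antisymm
    · have h1 : I ^ (n + 1) ⊓ (J * I ^ (n - 1)) ≤ J ⊓ I ^ (n + 1) :=
        le_inf (le_trans inf_le_right Ideal.mul_le_left) inf_le_left
      have h2 := h (n + 1) (by omega)
      simp only [Nat.add_sub_cancel] at h2
      exact h1.trans h2.le
    · refine le_inf ?_ ?_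
      · calc J * I ^ n ≤ I * I ^ n := Ideal.mul_mono_left hJI
          _ = I ^ (n + 1) := by ring
      · exact Ideal.mul_mono_right (Ideal.pow_le_pow_right (by omega))
  · intro h n hn
    induction n, hn using Nat.le_induction with
    | base => simpa using inf_eq_left.mpr hJI
    | succ n hn ih =>
      simp only [Nat.add_sub_cancel]
      apply le_antisymm
      · have h1 : J ⊓ I ^ (n + 1) ≤ I ^ (n + 1) ⊓ (J * I ^ (n - 1)) := by
          refine le_inf inf_le_right ?_
          calc J ⊓ I ^ (n + 1) ≤ J ⊓ I ^ n :=
                inf_le_inf_left _ (Ideal.pow_le_pow_right (by omega))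
            _ = J * I ^ (n - 1) := ih
        exact h1.trans (h n hn).le
      · refine le_inf Ideal.mul_le_left ?_
        calc J * I ^ n ≤ I * I ^ n := Ideal.mul_mono_left hJI
          _ = I ^ (n + 1) := by ring
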